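/- arXiv:2002.01904 — 4 statements merged into one kernel-verified Lean document; each statement's English description precedes it below -/
import Mathlib

section
/- Let r ≥ 3 be an odd integer and let i be an even natural number with 0 < i ≤ r−2. Then ∑_{j ∈ I_r} [j+1] · [(i+1)(j+1)] = 0, where the sum ranges over all even natural numbers j ≤ r−2 and [n] = sin(2πn/r)/sin(2π/r). Equivalently, an i-colored strand encircled by a 0-framed Kirby-colored unknot gives the zero skein unless i = 0: ∑_{j ∈ I_r} Δ_j H(i,j) = 0 for i ∈ I_r, i ≠ 0, where Δ_j = (−1)^{j+1}[j+1] and H(i,j) = (−1)^{i+j}[(i+1)(j+1)]. -/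
open Real Finset

/-- The quantum integer `[n] = sin(2πn/r)/sin(2π/r)` at `q = exp(2πi/r)`. -/
noncomputable def qint (r n : ℕ) : ℝ :=
  Real.sin (2 * Real.pi * n / r) / Real.sin (2 * Real.pi / r)

/-- `I_r`: the set of even natural numbers at most `r − 2`. -/
def Ir (r : ℕ) : Finset ℕ := (Finset.range (r - 1)).filter (fun i => Even i)

/-- `Δ_j = (−1)^{j+1}[j+1]`, the value of the unknot colored `j`. -/
noncomputable def Del (r j : ℕ) : ℝ := (-1 : ℝ) ^ (j + 1) * qint r (j + 1)

/-- `H(i,j) = (−1)^{i+j}[(i+1)(j+1)]`, the Kauffman bracket of the 0-framed Hopf link. -/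
noncomputable def Hopf (r i j : ℕ) : ℝ := (-1 : ℝ) ^ (i + j) * qint r ((i + 1) * (j + 1))

lemma Ir_eq (r : ℕ) (hodd : Odd r) :
    Ir r = (Finset.range ((r-1)/2)).image (fun t => 2*t) := by
  obtain ⟨k, hk⟩ := hodd
  ext j
  simp only [Ir, Finset.mem_filter, Finset.mem_range, Finset.mem_image, Nat.even_iff]
  constructor
  · rintro ⟨h1, h2⟩; exact ⟨j/2, by omega, by omega⟩
  · rintro ⟨t, h1, h2⟩; omega

lemma geom_part (r : ℕ) (hr : 3 ≤ r) (hodd : Odd r) (w : ℂ)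
    (hwr : w ^ r = 1) (hw1 : w ≠ 1) :
    ∑ j ∈ Ir r, w ^ (j+1) = -1/(w+1) := by
  have hwm1 : w ≠ -1 := by
    intro h
    rw [h, hodd.neg_one_pow] at hwr
    norm_num at hwr
  have hw2 : w^2 ≠ 1 := by
    intro h
    have : (w - 1) * (w + 1) = 0 := by linear_combination h
    rcases mul_eq_zero.1 this with h' | h'
    · exact hw1 (by linear_combination h')
    · exact hwm1 (by linear_combination h')
  obtain ⟨k, hk⟩ := hodd
  have hodd : Odd r := ⟨k, hk⟩
  have hkey : w * w^(r-1) = 1 := by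
    rw [← pow_succ']
    rwa [show r-1+1 = r by omega]
  rw [Ir_eq r hodd, Finset.sum_image (by intros a _ b _ h; beta_reduce at h; omega)]
  have : ∀ t, w ^ (2*t+1) = (w^2)^t * w := fun t => by
    rw [pow_add, pow_mul, pow_one]
  simp_rw [this]
  rw [← Finset.sum_mul, geom_sum_eq hw2]
  have h2N : (w^2)^((r-1)/2) = w^(r-1) := by
    rw [← pow_mul]
    congr 1
    omega
  rw [h2N]
  have hne1 : w^2 - 1 ≠ 0 := sub_ne_zero.2 hw2
  have hne2 : w + 1 ≠ 0 := fun h => hwm1 (by linear_combination h)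
  field_simp
  linear_combination (w + 1) * hkey

lemma cos_sum (r : ℕ) (hr : 3 ≤ r) (hodd : Odd r) (m : ℕ) (hm : 0 < m) (hmr : m < r) :
    ∑ j ∈ Ir r, Real.cos (2 * Real.pi * m * (j + 1) / r) = -(1/2) := by
  have hr0 : (r : ℝ) ≠ 0 := by positivity
  set x : ℝ := 2 * Real.pi * m / r with hx
  set w : ℂ := Complex.exp (x * Complex.I) with hwdef
  have hr0c : (r:ℂ) ≠ 0 := Nat.cast_ne_zero.2 (by omega)
  have hwr : w ^ r = 1 := by
    rw [hwdef, ← Complex.exp_nat_mul]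
    have : (r:ℂ) * (↑x * Complex.I) = ((m:ℤ):ℂ) * (2 * ↑Real.pi * Complex.I) := by
      push_cast [hx]
      field_simp [hr0c]
    rw [this, Complex.exp_int_mul_two_pi_mul_I]
  have hw1 : w ≠ 1 := by
    intro h
    rw [hwdef, Complex.exp_eq_one_iff] at h
    obtain ⟨n, hn⟩ := h
    have hI : (Complex.I : ℂ) ≠ 0 := Complex.I_ne_zero
    have hx' : (x:ℂ) = n * (2 * Real.pi) := by
      have h2 : (x:ℂ) * Complex.I = ((n * (2*Real.pi) : ℂ)) * Complex.I := by
        linear_combination hn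
      exact mul_right_cancel₀ hI h2
    have hxr : x = n * (2 * Real.pi) := by exact_mod_cast hx'
    rw [hx] at hxr
    have hpi : (0:ℝ) < Real.pi := Real.pi_pos
    have hmr' : (m:ℝ) = n * r := by
      have hrpos : (0:ℝ) < r := by positivity
      field_simp at hxr
      nlinarith [hxr]
    have : (m:ℤ) = n * r := by exact_mod_cast hmr'
    rcases le_or_gt n 0 with h' | h'
    · nlinarith [this, hm, hmr]
    · have : (m:ℤ) ≥ r := by nlinarith [this]
      omega
  have hwm1 : w ≠ -1 := by
    intro h
    rw [h, hodd.neg_one_pow] at hwr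
    norm_num at hwr
  have hre : ∀ j : ℕ, (w ^ (j+1)).re = Real.cos (x * (j+1)) := by
    intro j
    rw [hwdef, ← Complex.exp_nat_mul]
    have : ((j:ℂ)+1) * (↑x * Complex.I) = ↑(x * (j+1)) * Complex.I := by
      push_cast; ring
    rw [show ((j+1 : ℕ):ℂ) * (↑x * Complex.I) = ↑(x * (j+1)) * Complex.I by push_cast; ring,
      Complex.exp_ofReal_mul_I_re]
  have hsum := geom_part r hr hodd w hwr hw1
  have hresum : ∑ j ∈ Ir r, Real.cos (x * (j+1)) = (-1/(w+1)).re := by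
    rw [← hsum, Complex.re_sum]
    exact Finset.sum_congr rfl fun j _ => (hre j).symm
  have hcos : w.re = Real.cos x := by rw [hwdef]; exact Complex.exp_ofReal_mul_I_re x
  have hsin : w.im = Real.sin x := by rw [hwdef]; exact Complex.exp_ofReal_mul_I_im x
  have hcne : Real.cos x ≠ -1 := by
    intro h
    apply hwm1
    have hs2 : Real.sin x = 0 := by
      have := Real.sin_sq_add_cos_sq x
      rw [h] at this
      nlinarith [this]
    apply Complex.ext <;> simp [hcos, hsin, h, hs2]
  have hre2 : (-1/(w+1)).re = -(1/2) := by
    rw [show (-1/(w+1) : ℂ) = -((w+1)⁻¹) by ring, Complex.neg_re, Complex.inv_re,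
      Complex.normSq_apply, Complex.add_re, Complex.add_im, Complex.one_re, Complex.one_im,
      hcos, hsin]
    have h1 : (Real.cos x + 1)^2 + (Real.sin x + 0)^2 = 2 + 2 * Real.cos x := by
      nlinarith [Real.sin_sq_add_cos_sq x]
    have hd : 2 + 2 * Real.cos x ≠ 0 := by
      intro h
      apply hcne
      linarith
    rw [show (Real.cos x + 1) * (Real.cos x + 1) + (Real.sin x + 0) * (Real.sin x + 0)
        = 2 + 2 * Real.cos x by nlinarith [Real.sin_sq_add_cos_sq x]]
    have hd' : 1 + Real.cos x ≠ 0 := fun h => hcne (by linarith)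
    field_simp
    ring
  rw [← hre2, ← hresum]
  apply Finset.sum_congr rfl
  intro j _
  congr 1
  push_cast [hx]
  ring

/-- for odd `r ≥ 3` and an even `i` with `0 < i ≤ r − 2`,
`∑_{j ∈ I_r} [j+1]·[(i+1)(j+1)] = 0`; equivalently the encirclement identity
`∑_{j ∈ I_r} Δ_j H(i,j) = 0` holds for `i ∈ I_r`, `i ≠ 0`. -/
theorem encirclement_vanishing (r : ℕ) (hr : 3 ≤ r) (hodd : Odd r)
    (i : ℕ) (hi : Even i) (hipos : 0 < i) (hile : i ≤ r - 2) :
    (∑ j ∈ Ir r, qint r (j + 1) * qint r ((i + 1) * (j + 1))) = 0 ∧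
    (∑ j ∈ Ir r, Del r j * Hopf r i j) = 0 := by
  obtain ⟨k, hk⟩ := hodd
  have hodd : Odd r := ⟨k, hk⟩
  obtain ⟨t, ht⟩ := hi
  have hir : i < r := by omega
  have hi2r : i + 2 < r := by omega
  have hpi := Real.pi_pos
  have hrpos : (0:ℝ) < r := by positivity
  have hs : 0 < Real.sin (2 * Real.pi / r) := by
    apply Real.sin_pos_of_pos_of_lt_pi
    · positivity
    · rw [div_lt_iff₀ hrpos]
      nlinarith [Real.pi_pos, (show (3:ℝ) ≤ r by exact_mod_cast hr)]
  set s := Real.sin (2 * Real.pi / r) with hsdef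
  have key : ∀ j ∈ Ir r, qint r (j + 1) * qint r ((i + 1) * (j + 1)) =
      (Real.cos (2 * Real.pi * i * (j + 1) / r)
        - Real.cos (2 * Real.pi * ((i+2:ℕ):ℝ) * (j + 1) / r)) / (2 * s^2) := by
    intro j _
    have hprod : Real.cos (2 * Real.pi * i * (j + 1) / r)
        - Real.cos (2 * Real.pi * ((i+2:ℕ):ℝ) * (j + 1) / r)
        = 2 * Real.sin (2 * Real.pi * (j+1 : ℕ) / r)
          * Real.sin (2 * Real.pi * ((i+1)*(j+1) : ℕ) / r) := by
      have e1 : 2 * Real.pi * (i:ℝ) * (j + 1) / r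
          = 2 * Real.pi * ((i+1)*(j+1) : ℕ) / r - 2 * Real.pi * (j+1 : ℕ) / r := by
        push_cast; field_simp; ring
      have e2 : 2 * Real.pi * ((i+2:ℕ):ℝ) * (j + 1) / r
          = 2 * Real.pi * ((i+1)*(j+1) : ℕ) / r + 2 * Real.pi * (j+1 : ℕ) / r := by
        push_cast; field_simp; ring
      rw [e1, e2, Real.cos_sub, Real.cos_add]
      ring
    unfold qint
    rw [← hsdef, div_mul_div_comm, hprod]
    ring
  constructor
  · rw [Finset.sum_congr rfl key, ← Finset.sum_div, Finset.sum_sub_distrib,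
      cos_sum r hr hodd i hipos hir, cos_sum r hr hodd (i+2) (by omega) hi2r]
    ring
  · have key2 : ∀ j ∈ Ir r, Del r j * Hopf r i j
        = -(qint r (j + 1) * qint r ((i + 1) * (j + 1))) := by
      intro j _
      unfold Del Hopf
      have hsign : (-1:ℝ)^(j+1) * (-1:ℝ)^(i+j) = -1 := by
        rw [← pow_add, show j+1+(i+j) = 2*(j+t)+1 by omega, pow_succ, pow_mul]
        norm_num
      calc (-1:ℝ)^(j+1) * qint r (j+1) * ((-1:ℝ)^(i+j) * qint r ((i+1)*(j+1)))
          = ((-1:ℝ)^(j+1) * (-1:ℝ)^(i+j)) * (qint r (j+1) * qint r ((i+1)*(j+1))) := by ring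
        _ = -(qint r (j+1) * qint r ((i+1)*(j+1))) := by rw [hsign]; ring
    rw [Finset.sum_congr rfl key2, Finset.sum_neg_distrib]
    rw [Finset.sum_congr rfl key, ← Finset.sum_div, Finset.sum_sub_distrib,
      cos_sum r hr hodd i hipos hir, cos_sum r hr hodd (i+2) (by omega) hi2r]
    ring
end

section
/- Let r ≥ 3 be an odd integer. For all even natural numbers i, k with i, k ≤ r−2, the Hopf-link pairing satisfies the orthogonality relation ∑_{j ∈ I_r} [(i+1)(j+1)] · [(k+1)(j+1)] = (r/(4 sin²(2π/r))) · δ_{i,k}, where the sum ranges over all even natural numbers j ≤ r−2, [n] = sin(2πn/r)/sin(2π/r), and δ_{i,k} equals 1 if i = k and 0 otherwise. -/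
open Real Finset

lemma sum_cos_dvd (r c : ℕ) (hr : 0 < r) :
    ∑ m ∈ Finset.range r, Real.cos (2 * Real.pi * c * m / r) =
      if r ∣ c then (r : ℝ) else 0 := by
  have hr' : (r : ℝ) ≠ 0 := Nat.cast_ne_zero.mpr hr.ne'
  have hrC : (r : ℂ) ≠ 0 := Nat.cast_ne_zero.mpr hr.ne'
  set z : ℂ := Complex.exp (2 * Real.pi * c / r * Complex.I) with hzdef
  have hre : ∀ m : ℕ, Real.cos (2 * Real.pi * c * m / r) = (z ^ m).re := by
    intro m
    rw [hzdef, ← Complex.exp_nat_mul]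
    have h1 : (m : ℂ) * (2 * Real.pi * c / r * Complex.I)
        = ((2 * Real.pi * c * m / r : ℝ) : ℂ) * Complex.I := by
      push_cast; ring
    rw [h1, Complex.exp_ofReal_mul_I_re]
  simp_rw [hre]
  rw [← Complex.re_sum]
  by_cases hdvd : r ∣ c
  · obtain ⟨t, ht⟩ := id hdvd
    have hz1 : z = 1 := by
      have h2 : (2 * (Real.pi : ℂ) * c / r) * Complex.I
          = (t : ℤ) * (2 * Real.pi * Complex.I) := by
        subst ht; push_cast; field_simp
      rw [hzdef, h2, Complex.exp_int_mul_two_pi_mul_I]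
    rw [if_pos hdvd]
    simp [hz1]
  · have hz1 : z ≠ 1 := by
      intro h
      rw [hzdef, Complex.exp_eq_one_iff] at h
      obtain ⟨n, hn⟩ := h
      have hne : (2 * (Real.pi : ℂ) * Complex.I) ≠ 0 := by
        simp [Real.pi_ne_zero, Complex.I_ne_zero]
      have h2 : (c : ℂ) * (2 * Real.pi * Complex.I)
          = ((n * r : ℤ) : ℂ) * (2 * Real.pi * Complex.I) := by
        field_simp at hn
        push_cast
        linear_combination (2 * (Real.pi : ℂ) * Complex.I) * hn
      have h3 : (c : ℂ) = ((n * r : ℤ) : ℂ) := mul_right_cancel₀ hne h2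
      have h4 : (c : ℤ) = n * r := by exact_mod_cast h3
      exact hdvd (Int.natCast_dvd_natCast.mp ⟨n, by rw [h4]; ring⟩)
    have hzr : z ^ r = 1 := by
      rw [hzdef, ← Complex.exp_nat_mul]
      have h2 : (r : ℂ) * (2 * Real.pi * c / r * Complex.I)
          = (c : ℤ) * (2 * Real.pi * Complex.I) := by
        push_cast; field_simp
      rw [h2, Complex.exp_int_mul_two_pi_mul_I]
    rw [geom_sum_eq hz1, hzr, if_neg hdvd]
    simp

lemma sum_sin_sin (r a b : ℕ) (hr : 0 < r) (hab : a ≤ b) :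
    ∑ m ∈ Finset.range r, Real.sin (2 * Real.pi * a * m / r) * Real.sin (2 * Real.pi * b * m / r)
      = ((if r ∣ (b - a) then (r : ℝ) else 0) - (if r ∣ (a + b) then (r : ℝ) else 0)) / 2 := by
  have key : ∀ m : ℕ,
      Real.sin (2 * Real.pi * a * m / r) * Real.sin (2 * Real.pi * b * m / r)
        = (Real.cos (2 * Real.pi * (b - a : ℕ) * m / r)
            - Real.cos (2 * Real.pi * (a + b : ℕ) * m / r)) / 2 := by
    intro m
    have h2 : 2 * Real.pi * (b - a : ℕ) * m / r
        = 2 * Real.pi * b * m / r - 2 * Real.pi * a * m / r := by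
      rw [Nat.cast_sub hab]; ring
    have h3 : 2 * Real.pi * (a + b : ℕ) * m / r
        = 2 * Real.pi * a * m / r + 2 * Real.pi * b * m / r := by
      push_cast; ring
    rw [h2, h3, Real.cos_sub, Real.cos_add]
    ring
  simp_rw [key]
  rw [← Finset.sum_div, Finset.sum_sub_distrib, sum_cos_dvd r (b - a) hr,
    sum_cos_dvd r (a + b) hr]

lemma double_sum (r : ℕ) (hr : 3 ≤ r) (hodd : Odd r) (g : ℕ → ℝ)
    (hg0 : g 0 = 0) (hsym : ∀ n, 1 ≤ n → n ≤ r - 1 → g (r - n) = g n) :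
    ∑ m ∈ Finset.range r, g m = 2 * ∑ j ∈ Ir r, g (j + 1) := by
  have hr2 : r % 2 = 1 := Nat.odd_iff.mp hodd
  obtain ⟨s, hs⟩ : ∃ s, r = s + 1 := ⟨r - 1, by omega⟩
  have hIr : Ir r = (Finset.range s).filter (fun i => Even i) := by
    rw [Ir, hs]; simp
  rw [hIr, hs, Finset.sum_range_succ' g s, hg0, add_zero]
  rw [← Finset.sum_filter_add_sum_filter_not (Finset.range s) Even (fun i => g (i + 1))]
  have hodd_eq : ∑ j ∈ (Finset.range s).filter (fun i => ¬ Even i), g (j + 1)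
      = ∑ j ∈ (Finset.range s).filter (fun i => Even i), g (j + 1) := by
    apply Finset.sum_nbij' (i := fun j => s - 1 - j) (j := fun j => s - 1 - j)
    · intro x hx
      simp only [Finset.mem_filter, Finset.mem_range, Nat.even_iff, Nat.not_even_iff] at hx ⊢
      omega
    · intro x hx
      simp only [Finset.mem_filter, Finset.mem_range, Nat.even_iff, Nat.not_even_iff] at hx ⊢
      omega
    · intro x hx
      simp only [Finset.mem_filter, Finset.mem_range] at hx
      omega
    · intro x hx
      simp only [Finset.mem_filter, Finset.mem_range] at hx
      omega
    · intro x hx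
      simp only [Finset.mem_filter, Finset.mem_range, Nat.not_even_iff] at hx
      have h1 : s - 1 - x + 1 = (s + 1) - (x + 1) := by omega
      rw [h1, ← hs, hsym (x + 1) (by omega) (by omega)]
  rw [hodd_eq]
  ring

lemma hopf_aux (r : ℕ) (hr : 3 ≤ r) (hodd : Odd r) (i k : ℕ) (hik : i ≤ k)
    (hi : Even i) (hile : i ≤ r - 2) (hk : Even k) (hkle : k ≤ r - 2) :
    ∑ j ∈ Ir r, Real.sin (2 * Real.pi * ((i + 1) * (j + 1) : ℕ) / r)
        * Real.sin (2 * Real.pi * ((k + 1) * (j + 1) : ℕ) / r)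
      = if i = k then (r : ℝ) / 4 else 0 := by
  have hr0 : 0 < r := by omega
  have hrne : (r : ℝ) ≠ 0 := Nat.cast_ne_zero.mpr hr0.ne'
  have hr2 : r % 2 = 1 := Nat.odd_iff.mp hodd
  have hi2 : i % 2 = 0 := Nat.even_iff.mp hi
  have hk2 : k % 2 = 0 := Nat.even_iff.mp hk
  set g : ℕ → ℝ := fun m =>
    Real.sin (2 * Real.pi * ((i + 1 : ℕ) : ℝ) * m / r)
      * Real.sin (2 * Real.pi * ((k + 1 : ℕ) : ℝ) * m / r) with hg
  have hconv : ∀ j : ℕ,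
      Real.sin (2 * Real.pi * ((i + 1) * (j + 1) : ℕ) / r)
          * Real.sin (2 * Real.pi * ((k + 1) * (j + 1) : ℕ) / r) = g (j + 1) := by
    intro j
    simp only [hg]
    have e1 : (2 : ℝ) * Real.pi * ((i + 1) * (j + 1) : ℕ) / r
        = 2 * Real.pi * ((i + 1 : ℕ) : ℝ) * ((j + 1 : ℕ) : ℝ) / r := by push_cast; ring
    have e2 : (2 : ℝ) * Real.pi * ((k + 1) * (j + 1) : ℕ) / r
        = 2 * Real.pi * ((k + 1 : ℕ) : ℝ) * ((j + 1 : ℕ) : ℝ) / r := by push_cast; ring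
    rw [e1, e2]
  have hg0 : g 0 = 0 := by simp [hg]
  have hsymm : ∀ n, 1 ≤ n → n ≤ r - 1 → g (r - n) = g n := by
    intro n h1 h2
    have hc : ∀ a : ℕ, 2 * Real.pi * (a : ℝ) * ((r - n : ℕ) : ℝ) / r
        = (a : ℝ) * (2 * Real.pi) - 2 * Real.pi * (a : ℝ) * n / r := by
      intro a
      rw [Nat.cast_sub (by omega : n ≤ r)]
      field_simp
    simp only [hg, hc, Real.sin_nat_mul_two_pi_sub]
    ring
  have hsum : ∑ j ∈ Ir r, Real.sin (2 * Real.pi * ((i + 1) * (j + 1) : ℕ) / r)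
      * Real.sin (2 * Real.pi * ((k + 1) * (j + 1) : ℕ) / r) = ∑ j ∈ Ir r, g (j + 1) :=
    Finset.sum_congr rfl fun j _ => hconv j
  have hdbl := double_sum r hr hodd g hg0 hsymm
  have hfull := sum_sin_sin r (i + 1) (k + 1) hr0 (by omega)
  have hnd : ¬ r ∣ ((i + 1) + (k + 1)) := by
    rintro ⟨t, ht⟩
    have h2 : t < 2 := by
      by_contra h
      have h3 : r * 2 ≤ r * t := Nat.mul_le_mul_left r (by omega)
      omega
    interval_cases t <;> omega
  rw [hfull] at hdbl
  rw [hsum]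
  by_cases hik2 : i = k
  · subst hik2
    simp only [Nat.sub_self, Nat.dvd_zero, if_true, if_neg hnd] at hdbl
    rw [if_pos rfl]
    linarith
  · have hnd2 : ¬ r ∣ ((k + 1) - (i + 1)) := by
      intro h
      have hpos : 0 < (k + 1) - (i + 1) := by omega
      exact absurd (Nat.le_of_dvd hpos h) (by omega)
    rw [if_neg hnd2, if_neg hnd] at hdbl
    rw [if_neg hik2]
    linarith

/-- for odd `r ≥ 3` and even `i, k ≤ r − 2`, the Hopf-link pairing is
orthogonal: `∑_{j ∈ I_r} [(i+1)(j+1)]·[(k+1)(j+1)] = (r/(4 sin²(2π/r)))·δ_{i,k}`. -/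
theorem hopf_pairing_orthogonality (r : ℕ) (hr : 3 ≤ r) (hodd : Odd r)
    (i k : ℕ) (hi : Even i) (hile : i ≤ r - 2) (hk : Even k) (hkle : k ≤ r - 2) :
    (∑ j ∈ Ir r, qint r ((i + 1) * (j + 1)) * qint r ((k + 1) * (j + 1))) =
      if i = k then r / (4 * Real.sin (2 * Real.pi / r) ^ 2) else 0 := by
  have hr0 : 0 < r := by omega
  have hrne : (r : ℝ) ≠ 0 := Nat.cast_ne_zero.mpr hr0.ne'
  have hsin : Real.sin (2 * Real.pi / r) ≠ 0 := by
    have h1 : 0 < 2 * Real.pi / r := by positivity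
    have h2 : 2 * Real.pi / r < Real.pi := by
      rw [div_lt_iff₀ (by positivity)]
      have : (3 : ℝ) ≤ r := by exact_mod_cast hr
      nlinarith [Real.pi_pos]
    exact (Real.sin_pos_of_pos_of_lt_pi h1 h2).ne'
  have hq : ∀ j : ℕ, qint r ((i + 1) * (j + 1)) * qint r ((k + 1) * (j + 1))
      = (Real.sin (2 * Real.pi * ((i + 1) * (j + 1) : ℕ) / r)
          * Real.sin (2 * Real.pi * ((k + 1) * (j + 1) : ℕ) / r))
        / Real.sin (2 * Real.pi / r) ^ 2 := by
    intro j
    rw [qint, qint]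
    ring
  rw [Finset.sum_congr rfl fun j _ => hq j, ← Finset.sum_div]
  have key : ∑ j ∈ Ir r, Real.sin (2 * Real.pi * ((i + 1) * (j + 1) : ℕ) / r)
      * Real.sin (2 * Real.pi * ((k + 1) * (j + 1) : ℕ) / r)
      = if i = k then (r : ℝ) / 4 else 0 := by
    rcases le_total i k with h | h
    · exact hopf_aux r hr hodd i k h hi hile hk hkle
    · have h2 := hopf_aux r hr hodd k i h hk hkle hi hile
      rw [Finset.sum_congr rfl fun j _ => mul_comm
        (Real.sin (2 * Real.pi * ((k + 1) * (j + 1) : ℕ) / r))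
        (Real.sin (2 * Real.pi * ((i + 1) * (j + 1) : ℕ) / r))] at h2
      rw [h2]
      simp [eq_comm]
  rw [key]
  split_ifs
  · rw [div_div]
  · simp
end

section
/- Let r ≥ 3 be an odd integer and let j be a natural number with 0 ≤ j ≤ r−2. Then (−1)^j · sin(π(j+1)(r+1)/r) = −sin(π(j+1)/r); consequently (−1)^j · [((r+1)/2)(j+1)] = −sin(π(j+1)/r)/sin(2π/r) < 0, i.e., the Hopf-link pairing H((r−1)/2, j) = (−1)^{(r−1)/2 + j}[((r+1)/2)(j+1)] has, up to the fixed global sign (−1)^{(r−1)/2}, constant strictly negative sign as j ranges over 0,…,r−2. -/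
open Real

/-- for odd `r ≥ 3` and `0 ≤ j ≤ r − 2`,
`(−1)^j sin(π(j+1)(r+1)/r) = −sin(π(j+1)/r)`; consequently
`(−1)^j [((r+1)/2)(j+1)] = −sin(π(j+1)/r)/sin(2π/r) < 0`: the Hopf-link pairing
`H((r−1)/2, j)` has, up to the fixed global sign `(−1)^{(r−1)/2}`, constant strictly
negative sign as `j` ranges over `0,…,r−2`. -/
theorem hopf_pairing_sign_neg (r : ℕ) (hr : 3 ≤ r) (hodd : Odd r)
    (j : ℕ) (hj : j ≤ r - 2) :
    (-1 : ℝ) ^ j * Real.sin (Real.pi * (j + 1) * (r + 1) / r) =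
        -Real.sin (Real.pi * (j + 1) / r) ∧
    (-1 : ℝ) ^ j * qint r (((r + 1) / 2) * (j + 1)) =
        -Real.sin (Real.pi * (j + 1) / r) / Real.sin (2 * Real.pi / r) ∧
    (-1 : ℝ) ^ j * qint r (((r + 1) / 2) * (j + 1)) < 0 := by
  have hr0 : (r : ℝ) ≠ 0 := by positivity
  have hrR : (3 : ℝ) ≤ (r : ℝ) := by exact_mod_cast hr
  -- angle rewriting
  have hangle : Real.pi * (j + 1) * (r + 1) / r
      = Real.pi * (j + 1) / r + (j + 1 : ℕ) * Real.pi := by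
    push_cast
    field_simp
    ring
  have hsin : Real.sin (Real.pi * (j + 1) * (r + 1) / r)
      = (-1) ^ (j + 1) * Real.sin (Real.pi * (j + 1) / r) := by
    rw [hangle, Real.sin_add_nat_mul_pi]
  have h1 : (-1 : ℝ) ^ j * Real.sin (Real.pi * (j + 1) * (r + 1) / r)
      = -Real.sin (Real.pi * (j + 1) / r) := by
    rw [hsin, ← mul_assoc, ← pow_add, Odd.neg_one_pow ⟨j, by ring⟩, neg_one_mul]
  -- nat division fact
  have hdvd : 2 ∣ r + 1 := hodd.add_one.two_dvd
  have h2 : ((r + 1) / 2 : ℕ) * 2 = r + 1 := Nat.div_mul_cancel hdvd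
  have h2R : (((r + 1) / 2 : ℕ) : ℝ) * 2 = (r : ℝ) + 1 := by exact_mod_cast h2
  have hcast : ((((r + 1) / 2) * (j + 1) : ℕ) : ℝ) * 2 = (r + 1) * (j + 1) := by
    calc ((((r + 1) / 2) * (j + 1) : ℕ) : ℝ) * 2
        = ((((r + 1) / 2 : ℕ) : ℝ) * 2) * ((j : ℝ) + 1) := by push_cast; ring
      _ = (r + 1) * (j + 1) := by rw [h2R]
  have hq : qint r (((r + 1) / 2) * (j + 1))
      = Real.sin (Real.pi * (j + 1) * (r + 1) / r) / Real.sin (2 * Real.pi / r) := by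
    unfold qint
    congr 1
    have e1 : (2 : ℝ) * Real.pi * ((((r + 1) / 2) * (j + 1) : ℕ) : ℝ)
        = Real.pi * (((((r + 1) / 2) * (j + 1) : ℕ) : ℝ) * 2) := by ring
    rw [e1, hcast]; ring
  have h2' : (-1 : ℝ) ^ j * qint r (((r + 1) / 2) * (j + 1))
      = -Real.sin (Real.pi * (j + 1) / r) / Real.sin (2 * Real.pi / r) := by
    rw [hq, ← mul_div_assoc, h1]
  refine ⟨h1, h2', ?_⟩
  rw [h2']
  have hpi := Real.pi_pos
  have hjr : (j : ℝ) + 1 < r := by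
    have : j + 1 < r := by omega
    exact_mod_cast this
  have hs1 : 0 < Real.sin (Real.pi * (j + 1) / r) := by
    apply Real.sin_pos_of_pos_of_lt_pi
    · positivity
    · rw [div_lt_iff₀ (by linarith)]
      nlinarith
  have hs2 : 0 < Real.sin (2 * Real.pi / r) := by
    apply Real.sin_pos_of_pos_of_lt_pi
    · positivity
    · rw [div_lt_iff₀ (by linarith)]
      nlinarith
  rw [neg_div, neg_lt_zero]
  positivity
end

section
/- Let r ≥ 3 be an odd integer and let j be a natural number with 0 ≤ j ≤ r−2. Then (−1)^j · sin(π(j+1)(r−1)/r) = sin(π(j+1)/r); consequently (−1)^j · [((r−1)/2)(j+1)] = sin(π(j+1)/r)/sin(2π/r) > 0, i.e., the Hopf-link pairing H((r−3)/2, j) = (−1)^{(r−3)/2 + j}[((r−1)/2)(j+1)] has, up to the fixed global sign (−1)^{(r−3)/2}, constant strictly positive sign as j ranges over 0,…,r−2. -/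
open Real

/-- for odd `r ≥ 3` and `0 ≤ j ≤ r − 2`,
`(−1)^j sin(π(j+1)(r−1)/r) = sin(π(j+1)/r)`; consequently
`(−1)^j [((r−1)/2)(j+1)] = sin(π(j+1)/r)/sin(2π/r) > 0`: the Hopf-link pairing
`H((r−3)/2, j)` has, up to the fixed global sign `(−1)^{(r−3)/2}`, constant strictly
positive sign as `j` ranges over `0,…,r−2`. -/
theorem hopf_pairing_sign_pos (r : ℕ) (hr : 3 ≤ r) (hodd : Odd r)
    (j : ℕ) (hj : j ≤ r - 2) :
    (-1 : ℝ) ^ j * Real.sin (Real.pi * (j + 1) * (r - 1) / r) =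
        Real.sin (Real.pi * (j + 1) / r) ∧
    (-1 : ℝ) ^ j * qint r (((r - 1) / 2) * (j + 1)) =
        Real.sin (Real.pi * (j + 1) / r) / Real.sin (2 * Real.pi / r) ∧
    0 < (-1 : ℝ) ^ j * qint r (((r - 1) / 2) * (j + 1)) := by
  obtain ⟨k, hk⟩ := hodd
  have hrpos : (0:ℝ) < r := by positivity
  have hrne : (r:ℝ) ≠ 0 := ne_of_gt hrpos
  -- key identity
  have harg : Real.pi * (j + 1) * ((r:ℝ) - 1) / r
      = (j + 1 : ℕ) * Real.pi - Real.pi * (j + 1) / r := by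
    push_cast
    field_simp
  have h1 : (-1 : ℝ) ^ j * Real.sin (Real.pi * (j + 1) * (r - 1) / r) =
      Real.sin (Real.pi * (j + 1) / r) := by
    rw [harg, Real.sin_nat_mul_pi_sub]
    push_cast
    ring_nf
    simp [pow_mul]
    rw [← pow_mul, mul_comm j 2, pow_mul]
    norm_num
  have hdiv : (r - 1) / 2 = k := by omega
  have hcast : ((((r - 1) / 2) * (j + 1) : ℕ) : ℝ) = k * (j + 1) := by
    rw [hdiv]; push_cast; ring
  have hrk : (r:ℝ) = 2 * k + 1 := by exact_mod_cast congrArg (Nat.cast : ℕ → ℝ) hk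
  have hargq : 2 * Real.pi * ((((r - 1) / 2) * (j + 1) : ℕ) : ℝ) / r
      = Real.pi * (j + 1) * ((r:ℝ) - 1) / r := by
    rw [hcast, hrk]; ring
  have h2 : (-1 : ℝ) ^ j * qint r (((r - 1) / 2) * (j + 1)) =
      Real.sin (Real.pi * (j + 1) / r) / Real.sin (2 * Real.pi / r) := by
    unfold qint
    rw [hargq, mul_div_assoc' ((-1:ℝ)^j), h1]
  refine ⟨h1, h2, ?_⟩
  rw [h2]
  have hnum : 0 < Real.sin (Real.pi * (j + 1) / r) := by
    apply Real.sin_pos_of_pos_of_lt_pi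
    · positivity
    · rw [div_lt_iff₀ hrpos]
      have : (j:ℝ) + 1 < r := by
        have : j + 1 < r := by omega
        exact_mod_cast this
      nlinarith [Real.pi_pos]
  have hden : 0 < Real.sin (2 * Real.pi / r) := by
    apply Real.sin_pos_of_pos_of_lt_pi
    · positivity
    · rw [div_lt_iff₀ hrpos]
      have : (3:ℝ) ≤ r := by exact_mod_cast hr
      nlinarith [Real.pi_pos]
  positivity
end
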